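/- For real numbers c1, c2 with 0 < c1 < c2 < 1, define y : ℝ → ℝ by y(r) = 1/(1 + exp(-(c2 - c1) r)). Then for every s ∈ ℝ, lim_{t → ∞} (1 - y(s)) ∫_s^t e^{-(1 - c1)(r - s)} / (1 - y(r)) dr = y(s)/(1 - c2) + (1 - y(s))/(1 - c1). -/

import Mathlib

open Filter

lemma int_exp_mul (c s t : ℝ) (hc : c ≠ 0) :
    ∫ r in s..t, Real.exp (c * r) = (Real.exp (c * t) - Real.exp (c * s)) / c := by
  have h : ∀ x ∈ Set.uIcc s t,
      HasDerivAt (fun r => Real.exp (c * r) / c) (Real.exp (c * x)) x := by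
    intro x _
    have h1 : HasDerivAt (fun r : ℝ => Real.exp (c * r)) (Real.exp (c * x) * c) x := by
      simpa [mul_comm] using ((hasDerivAt_id x).const_mul c).exp
    simpa [mul_div_cancel_right₀ _ hc] using h1.div_const c
  have hcont : IntervalIntegrable (fun r => Real.exp (c * r)) MeasureTheory.volume s t :=
    (Real.continuous_exp.comp (continuous_const.mul continuous_id)).intervalIntegrable s t
  have := intervalIntegral.integral_eq_sub_of_hasDerivAt h hcont
  rw [this]
  ring


/-- Limiting integral for the logistic curve `y(r) = 1/(1 + e^{-(c2-c1)r})`: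
`(1-y(s)) ∫_s^t e^{-(1-c1)(r-s)}/(1-y(r)) dr → y(s)/(1-c2) + (1-y(s))/(1-c1)`
as `t → ∞`. -/
theorem stmt_10 (c1 c2 : ℝ) (h0 : 0 < c1) (h12 : c1 < c2) (h2 : c2 < 1) :
    let y : ℝ → ℝ := fun r => 1 / (1 + Real.exp (-(c2 - c1) * r))
    ∀ s : ℝ,
      Tendsto (fun t : ℝ =>
          (1 - y s) * ∫ r in s..t, Real.exp (-(1 - c1) * (r - s)) / (1 - y r))
        atTop (nhds (y s / (1 - c2) + (1 - y s) / (1 - c1))) := by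
  intro y s
  have hc1 : (0:ℝ) < 1 - c1 := by linarith
  have hc2 : (0:ℝ) < 1 - c2 := by linarith
  have hy : ∀ r, 1 / (1 - y r) = 1 + Real.exp ((c2 - c1) * r) := by
    intro r
    have hx : (0:ℝ) < Real.exp (-(c2 - c1) * r) := Real.exp_pos _
    have hd : (0:ℝ) < 1 + Real.exp (-(c2 - c1) * r) := by linarith
    simp only [y]
    rw [one_sub_div (ne_of_gt hd)]
    have he : (1:ℝ) + Real.exp (-(c2 - c1) * r) - 1 = Real.exp (-(c2 - c1) * r) := by ring
    rw [he, one_div_div, add_div, div_self (ne_of_gt hx), one_div, ← Real.exp_neg, neg_mul, neg_neg]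
    ring
  have key : ∀ t, (∫ r in s..t, Real.exp (-(1 - c1) * (r - s)) / (1 - y r))
      = Real.exp ((1 - c1) * s) *
          ((Real.exp (-(1 - c1) * t) - Real.exp (-(1 - c1) * s)) / (-(1 - c1))
            + (Real.exp (-(1 - c2) * t) - Real.exp (-(1 - c2) * s)) / (-(1 - c2))) := by
    intro t
    have h1 : ∀ r, Real.exp (-(1 - c1) * (r - s)) / (1 - y r)
        = Real.exp ((1 - c1) * s) * (Real.exp (-(1 - c1) * r) + Real.exp (-(1 - c2) * r)) := by
      intro r
      rw [div_eq_mul_one_div, hy r, mul_add, mul_one, ← Real.exp_add, mul_add,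
        ← Real.exp_add, ← Real.exp_add]
      congr 2 <;> ring
    rw [intervalIntegral.integral_congr (fun r _ => h1 r)]
    have i1 : IntervalIntegrable (fun r => Real.exp (-(1 - c1) * r)) MeasureTheory.volume s t :=
      (Real.continuous_exp.comp (continuous_const.mul continuous_id)).intervalIntegrable s t
    have i2 : IntervalIntegrable (fun r => Real.exp (-(1 - c2) * r)) MeasureTheory.volume s t :=
      (Real.continuous_exp.comp (continuous_const.mul continuous_id)).intervalIntegrable s t
    rw [intervalIntegral.integral_const_mul, intervalIntegral.integral_add i1 i2,
      int_exp_mul _ _ _ (by linarith : -(1 - c1) ≠ 0),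
      int_exp_mul _ _ _ (by linarith : -(1 - c2) ≠ 0)]
  have lim1 : Tendsto (fun t : ℝ => Real.exp (-(1 - c1) * t)) atTop (nhds 0) := by
    apply Real.tendsto_exp_atBot.comp
    exact Tendsto.const_mul_atTop_of_neg (by linarith) tendsto_id
  have lim2 : Tendsto (fun t : ℝ => Real.exp (-(1 - c2) * t)) atTop (nhds 0) := by
    apply Real.tendsto_exp_atBot.comp
    exact Tendsto.const_mul_atTop_of_neg (by linarith) tendsto_id
  have main : Tendsto (fun t : ℝ =>
      (1 - y s) * (Real.exp ((1 - c1) * s) *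
        ((Real.exp (-(1 - c1) * t) - Real.exp (-(1 - c1) * s)) / (-(1 - c1))
          + (Real.exp (-(1 - c2) * t) - Real.exp (-(1 - c2) * s)) / (-(1 - c2)))))
      atTop (nhds ((1 - y s) * (Real.exp ((1 - c1) * s) *
        ((0 - Real.exp (-(1 - c1) * s)) / (-(1 - c1))
          + (0 - Real.exp (-(1 - c2) * s)) / (-(1 - c2)))))) :=
    Tendsto.const_mul _ (Tendsto.const_mul _
      (((lim1.sub_const _).div_const _).add ((lim2.sub_const _).div_const _)))
  have heq : (1 - y s) * (Real.exp ((1 - c1) * s) *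
        ((0 - Real.exp (-(1 - c1) * s)) / (-(1 - c1))
          + (0 - Real.exp (-(1 - c2) * s)) / (-(1 - c2))))
      = y s / (1 - c2) + (1 - y s) / (1 - c1) := by
    have hE : (0:ℝ) < Real.exp (-(c2 - c1) * s) := Real.exp_pos _
    have hd : (0:ℝ) < 1 + Real.exp (-(c2 - c1) * s) := by linarith
    have e1 : Real.exp ((1 - c1) * s) * Real.exp (-(1 - c1) * s) = 1 := by
      rw [← Real.exp_add, show (1 - c1) * s + -(1 - c1) * s = 0 by ring, Real.exp_zero]
    have e2 : Real.exp ((1 - c1) * s) * Real.exp (-(1 - c2) * s)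
        = Real.exp ((c2 - c1) * s) := by
      rw [← Real.exp_add]; congr 1; ring
    have e3 : Real.exp (-(c2 - c1) * s) * Real.exp ((c2 - c1) * s) = 1 := by
      rw [← Real.exp_add, show -(c2 - c1) * s + (c2 - c1) * s = 0 by ring, Real.exp_zero]
    simp only [y]
    set a := Real.exp ((1 - c1) * s) with ha
    set b := Real.exp (-(1 - c1) * s) with hb
    set c := Real.exp (-(1 - c2) * s) with hc
    set E := Real.exp (-(c2 - c1) * s) with hEe
    set F := Real.exp ((c2 - c1) * s) with hF
    have hne : (1:ℝ) + E ≠ 0 := ne_of_gt hd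
    have h1ne : (1:ℝ) - c1 ≠ 0 := ne_of_gt hc1
    have h2ne : (1:ℝ) - c2 ≠ 0 := ne_of_gt hc2
    rw [zero_sub, zero_sub, neg_div_neg_eq, neg_div_neg_eq]
    field_simp
    linear_combination E*(1-c2)*e1 + E*(1-c1)*e2 + (1-c1)*e3
  rw [← heq]
  exact main.congr (fun t => by rw [key t])
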